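/- For every α > 0, the two points (u₁, u₄, q) = ((2 + α ± √(α² + 20α + 4))/(2α), 0, (2-α)/α) are equilibrium points of the vacuum form-independent dynamical system, i.e. F vanishes at both points K₂₋ and K₂₊. -/

import Mathlib

/-- The vacuum form-independent dynamical system with parameter `α`, in
coordinates `(u₁, u₄, q)`. -/
noncomputable def vacuumFormIndepField (α u₁ u₄ q : ℝ) : ℝ × ℝ × ℝ :=
  (u₁ * (u₁ - 2 - q) - 2*q + 6*u₄^2 - 2,
   u₄ * (2 - q + u₁),
   -2 * (q - (1-α)/α) * (q - (2-α)/α))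

/-- For every `α > 0`, the two points
`K₂∓ = ((2 + α ∓ √(α² + 20α + 4))/(2α), 0, (2-α)/α)` are equilibrium points of
the vacuum form-independent dynamical system. -/
theorem K2_equilibrium_points (α : ℝ) (hα : 0 < α) :
    vacuumFormIndepField α
        ((2 + α - Real.sqrt (α^2 + 20*α + 4))/(2*α)) 0 ((2-α)/α) = (0, 0, 0) ∧
    vacuumFormIndepField α
        ((2 + α + Real.sqrt (α^2 + 20*α + 4))/(2*α)) 0 ((2-α)/α) = (0, 0, 0) := by
  have hne : α ≠ 0 := ne_of_gt hα
  have hnn : (0:ℝ) ≤ α^2 + 20*α + 4 := by nlinarith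
  have hs : Real.sqrt (α^2 + 20*α + 4) ^ 2 = α^2 + 20*α + 4 := Real.sq_sqrt hnn
  constructor <;>
  · simp only [vacuumFormIndepField, Prod.mk.injEq]
    refine ⟨?_, by ring, by field_simp; ring⟩
    field_simp
    nlinarith [hs, Real.sq_sqrt (show (0:ℝ) ≤ α * (α + 20) + 4 by nlinarith)]
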